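/- arXiv:2308.16610 — 3 statements merged into one kernel-verified Lean document; each statement's English description precedes it below -/
import Mathlib

section
/- Let ε_n ≥ 0 with ε_n → ε₀ ≥ 0, and let w_n, w ∈ L²(μ; ℝ^N) with w_n → w weakly in L²(μ; ℝ^N), i.e. ∫_Ω w_n·g dμ → ∫_Ω w·g dμ for every g ∈ L²(μ; ℝ^N). Then liminf_{n→∞} Φ_{ε_n}(w_n) ≥ Φ_{ε₀}(w) (the lower-bound condition (M1) of the Mosco convergence Φ_ε → Φ_{ε₀} on L²(μ; ℝ^N)). -/
open MeasureTheory
open scoped RealInnerProductSpace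

lemma sqrt_lip (a b r : ℝ) (ha : 0 ≤ a) (hb : 0 ≤ b) (hr : 0 ≤ r) :
    Real.sqrt (b ^ 2 + r) - |a - b| ≤ Real.sqrt (a ^ 2 + r) := by
  set s := Real.sqrt (a ^ 2 + r) with hs
  have hs0 : 0 ≤ s := Real.sqrt_nonneg _
  have hssq : s ^ 2 = a ^ 2 + r := Real.sq_sqrt (by positivity)
  have hsa : a ≤ s := by
    have := Real.sqrt_le_sqrt (show a ^ 2 ≤ a ^ 2 + r by linarith)
    rwa [Real.sqrt_sq ha] at this
  have h1 : Real.sqrt (b ^ 2 + r) ≤ s + |a - b| := by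
    have h2 : b ^ 2 + r ≤ (s + |a - b|) ^ 2 := by
      have habs : |a - b| ≥ b - a := by
        rw [abs_sub_comm]; exact le_abs_self _
      nlinarith [abs_nonneg (a - b), sq_abs (a - b)]
    calc Real.sqrt (b ^ 2 + r) ≤ Real.sqrt ((s + |a - b|) ^ 2) := Real.sqrt_le_sqrt h2
      _ = s + |a - b| := Real.sqrt_sq (by positivity)
  linarith

lemma grad_ineq {N : ℕ} (ε₀ : ℝ) (y z : EuclideanSpace ℝ (Fin N)) :
    Real.sqrt (ε₀ ^ 2 + ‖z‖ ^ 2) + ⟪(Real.sqrt (ε₀ ^ 2 + ‖z‖ ^ 2))⁻¹ • z, y - z⟫ ≤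
      Real.sqrt (ε₀ ^ 2 + ‖y‖ ^ 2) := by
  set γ := Real.sqrt (ε₀ ^ 2 + ‖z‖ ^ 2) with hγ
  set γy := Real.sqrt (ε₀ ^ 2 + ‖y‖ ^ 2) with hγy
  have hγ0 : 0 ≤ γ := Real.sqrt_nonneg _
  have hγy0 : 0 ≤ γy := Real.sqrt_nonneg _
  rcases eq_or_lt_of_le hγ0 with h0 | hpos
  · rw [← h0, inv_zero, zero_smul, inner_zero_left]
    simpa using hγy0
  · have hγsq : γ ^ 2 = ε₀ ^ 2 + ‖z‖ ^ 2 := Real.sq_sqrt (by positivity)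
    have hγysq : γy ^ 2 = ε₀ ^ 2 + ‖y‖ ^ 2 := Real.sq_sqrt (by positivity)
    have hcs : ⟪z, y⟫ ≤ ‖z‖ * ‖y‖ := real_inner_le_norm z y
    have hkey : ε₀ ^ 2 + ⟪z, y⟫ ≤ γ * γy := by
      rcases le_or_gt (ε₀ ^ 2 + ⟪z, y⟫) 0 with h | h
      · exact h.trans (by positivity)
      · have hsq : (ε₀ ^ 2 + ⟪z, y⟫) ^ 2 ≤ (γ * γy) ^ 2 := by
          have h2 : (γ * γy) ^ 2 = (ε₀ ^ 2 + ‖z‖ ^ 2) * (ε₀ ^ 2 + ‖y‖ ^ 2) := by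
            rw [mul_pow, hγsq, hγysq]
          rw [h2]
          nlinarith [norm_nonneg z, norm_nonneg y,
            abs_le.mp (abs_real_inner_le_norm z y), sq_nonneg (‖z‖ - ‖y‖), sq_nonneg ε₀]
        nlinarith [mul_nonneg hγ0 hγy0]
    rw [real_inner_smul_left, inner_sub_right, real_inner_self_eq_norm_sq]
    have hz2 : ‖z‖ ^ 2 = γ ^ 2 - ε₀ ^ 2 := by linarith
    rw [hz2]
    have hγne : γ ≠ 0 := ne_of_gt hpos
    have heq : γ + γ⁻¹ * (⟪z, y⟫ - (γ ^ 2 - ε₀ ^ 2)) = (ε₀ ^ 2 + ⟪z, y⟫) / γ := by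
      field_simp; ring
    rw [heq, div_le_iff₀ hpos]
    linarith [hkey]

lemma sqrt_add_sq_le (e t : ℝ) (ht : 0 ≤ t) : Real.sqrt (e ^ 2 + t ^ 2) ≤ |e| + t := by
  have h : e ^ 2 + t ^ 2 ≤ (|e| + t) ^ 2 := by nlinarith [abs_nonneg e, sq_abs e]
  calc Real.sqrt (e ^ 2 + t ^ 2) ≤ Real.sqrt ((|e| + t) ^ 2) := Real.sqrt_le_sqrt h
    _ = |e| + t := Real.sqrt_sq (by positivity)

lemma fvec_norm_le {N : ℕ} (a Cc e : ℝ) (h0 : 0 ≤ a) (h1 : a ≤ Cc)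
    (z : EuclideanSpace ℝ (Fin N)) :
    ‖(a * (Real.sqrt (e ^ 2 + ‖z‖ ^ 2))⁻¹) • z‖ ≤ Cc := by
  rw [norm_smul]
  set γ := Real.sqrt (e ^ 2 + ‖z‖ ^ 2) with hγ
  have hγ0 : 0 ≤ γ := Real.sqrt_nonneg _
  have hzγ : ‖z‖ ≤ γ := by
    rw [hγ]
    have := Real.sqrt_le_sqrt (show ‖z‖ ^ 2 ≤ e ^ 2 + ‖z‖ ^ 2 by nlinarith [sq_nonneg e])
    rwa [Real.sqrt_sq (norm_nonneg z)] at this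
  have hprod : γ⁻¹ * ‖z‖ ≤ 1 := by
    rcases eq_or_lt_of_le hγ0 with h | h
    · rw [← h, inv_zero, zero_mul]; norm_num
    · rw [← div_eq_inv_mul, div_le_one h]; exact hzγ
  have : ‖a * γ⁻¹‖ = a * γ⁻¹ := by
    rw [Real.norm_eq_abs, abs_of_nonneg (by positivity)]
  rw [this]
  calc a * γ⁻¹ * ‖z‖ = a * (γ⁻¹ * ‖z‖) := by ring
    _ ≤ Cc * 1 := mul_le_mul h1 hprod (by positivity) (h0.trans h1)
    _ = Cc := mul_one _

lemma pointwise_key {N : ℕ} (a Cc e0 e1 : ℝ) (ha0 : 0 ≤ a) (haC : a ≤ Cc)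
    (he0 : 0 ≤ e0) (he1 : 0 ≤ e1) (y z : EuclideanSpace ℝ (Fin N)) :
    a * Real.sqrt (e0 ^ 2 + ‖z‖ ^ 2) +
      (⟪(a * (Real.sqrt (e0 ^ 2 + ‖z‖ ^ 2))⁻¹) • z, y⟫ -
        ⟪(a * (Real.sqrt (e0 ^ 2 + ‖z‖ ^ 2))⁻¹) • z, z⟫) - Cc * |e1 - e0| ≤
      a * Real.sqrt (e1 ^ 2 + ‖y‖ ^ 2) := by
  rw [← inner_sub_right]
  have hg := grad_ineq (N := N) e0 y z
  have hl := sqrt_lip e1 e0 (‖y‖ ^ 2) he1 he0 (by positivity)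
  have hsmul : ((a * (Real.sqrt (e0 ^ 2 + ‖z‖ ^ 2))⁻¹) • z : EuclideanSpace ℝ (Fin N)) =
      a • ((Real.sqrt (e0 ^ 2 + ‖z‖ ^ 2))⁻¹ • z) := by rw [smul_smul]
  rw [hsmul, real_inner_smul_left]
  have h1 := mul_le_mul_of_nonneg_left hg ha0
  have h2 := mul_le_mul_of_nonneg_left hl ha0
  have h3 : a * |e1 - e0| ≤ Cc * |e1 - e0| :=
    mul_le_mul_of_nonneg_right haC (abs_nonneg _)
  nlinarith [h1, h2, h3]

lemma int_norm_le {N : ℕ} {Ω : Type*} [MeasurableSpace Ω] (μ : Measure Ω) [IsFiniteMeasure μ]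
    (u : Lp (EuclideanSpace ℝ (Fin N)) 2 μ) :
    ∫ x, ‖u x‖ ∂μ ≤ Real.sqrt ((μ Set.univ).toReal) * ‖u‖ := by
  set h : Lp ℝ 2 μ := ((Lp.memLp u).norm).toLp _ with hh_def
  have hh : h =ᵐ[μ] fun x => ‖u x‖ := MemLp.coeFn_toLp _
  have hone : ⇑(Lp.const 2 μ (1 : ℝ)) =ᵐ[μ] Function.const Ω (1 : ℝ) := Lp.coeFn_const 2 μ 1
  have hinner : ⟪h, Lp.const 2 μ (1 : ℝ)⟫ = ∫ x, ‖u x‖ ∂μ := by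
    rw [L2.inner_def]
    apply integral_congr_ae
    filter_upwards [hh, hone] with x h1 h2
    rw [h1, h2]
    simp [RCLike.inner_apply, Function.const]
  have hle : ⟪h, Lp.const 2 μ (1 : ℝ)⟫ ≤ ‖h‖ * ‖Lp.const 2 μ (1 : ℝ)‖ :=
    real_inner_le_norm _ _
  have hnh : ‖h‖ = ‖u‖ := by
    rw [hh_def, Lp.norm_toLp, Lp.norm_def, eLpNorm_norm]
  have hnone : ‖(Lp.const 2 μ (1 : ℝ) : Lp ℝ 2 μ)‖ ≤ Real.sqrt ((μ Set.univ).toReal) := by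
    refine (Lp.norm_const_le _ _ _).trans_eq ?_
    rw [Real.sqrt_eq_rpow]
    norm_num
    rfl
  calc ∫ x, ‖u x‖ ∂μ = ⟪h, Lp.const 2 μ (1 : ℝ)⟫ := hinner.symm
    _ ≤ ‖h‖ * ‖Lp.const 2 μ (1 : ℝ)‖ := hle
    _ ≤ ‖u‖ * Real.sqrt ((μ Set.univ).toReal) := by
        rw [hnh]; exact mul_le_mul_of_nonneg_left hnone (norm_nonneg u)
    _ = Real.sqrt ((μ Set.univ).toReal) * ‖u‖ := mul_comm _ _

/-- Lower-bound condition (M1) of the Mosco convergence `Φ_ε → Φ_{ε₀}`: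
if `ε_n ≥ 0`, `ε_n → ε₀ ≥ 0`, and `w_n → w` weakly in `L²(μ; ℝ^N)`, then
`liminf_{n→∞} Φ_{ε_n}(w_n) ≥ Φ_{ε₀}(w)`. -/
theorem Phi_eps_Mosco_lower_bound (N : ℕ) (hN : 0 < N)
    {Ω : Type*} [MeasurableSpace Ω] (μ : Measure Ω) [IsFiniteMeasure μ]
    (α : Ω → ℝ) (hαmeas : Measurable α) (C : ℝ) (hC : 0 ≤ C)
    (hα : ∀ᵐ x ∂μ, 0 ≤ α x ∧ α x ≤ C)
    (ε : ℕ → ℝ) (hε : ∀ n, 0 ≤ ε n) (ε₀ : ℝ) (hε₀ : 0 ≤ ε₀)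
    (hεconv : Filter.Tendsto ε Filter.atTop (nhds ε₀))
    (w : ℕ → Lp (EuclideanSpace ℝ (Fin N)) 2 μ)
    (wlim : Lp (EuclideanSpace ℝ (Fin N)) 2 μ)
    (hweak : ∀ g : Lp (EuclideanSpace ℝ (Fin N)) 2 μ,
        Filter.Tendsto (fun n => ∫ x, ⟪(w n) x, g x⟫ ∂μ) Filter.atTop
          (nhds (∫ x, ⟪wlim x, g x⟫ ∂μ))) :
    (∫ x, α x * Real.sqrt (ε₀ ^ 2 + ‖wlim x‖ ^ 2) ∂μ) ≤
      Filter.liminf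
        (fun n => ∫ x, α x * Real.sqrt ((ε n) ^ 2 + ‖(w n) x‖ ^ 2) ∂μ)
        Filter.atTop := by
  -- notation
  set E := EuclideanSpace ℝ (Fin N)
  -- the "gradient" function
  set fvec : Ω → E :=
    fun x => (α x * (Real.sqrt (ε₀ ^ 2 + ‖wlim x‖ ^ 2))⁻¹) • (wlim x : E) with hfvec_def
  -- measurability of fvec
  have hwlm : AEStronglyMeasurable (fun x => (wlim x : E)) μ := Lp.aestronglyMeasurable wlim
  have hφmeas : Measurable fun t : ℝ => (Real.sqrt (ε₀ ^ 2 + t ^ 2))⁻¹ :=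
    ((measurable_const.add (measurable_id.pow_const 2)).sqrt).inv
  have hscal : AEMeasurable (fun x => α x * (Real.sqrt (ε₀ ^ 2 + ‖wlim x‖ ^ 2))⁻¹) μ :=
    hαmeas.aemeasurable.mul (hφmeas.comp_aemeasurable hwlm.norm.aemeasurable)
  have hfvec_meas : AEStronglyMeasurable fvec μ :=
    hscal.aestronglyMeasurable.smul hwlm
  have hfvec_bd : ∀ᵐ x ∂μ, ‖fvec x‖ ≤ C := by
    filter_upwards [hα] with x hx
    exact fvec_norm_le (α x) C ε₀ hx.1 hx.2 (wlim x)
  have hf_mem : MemLp fvec 2 μ := MemLp.of_bound hfvec_meas C hfvec_bd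
  set g : Lp E 2 μ := hf_mem.toLp fvec with hg_def
  have hg : ⇑g =ᵐ[μ] fvec := MemLp.coeFn_toLp _
  -- integrability facts
  have hint_norm : ∀ u : Lp E 2 μ, Integrable (fun x => ‖u x‖) μ :=
    fun u => ((Lp.memLp u).norm).integrable one_le_two
  have hint_phi : ∀ (e : ℝ) (u : Lp E 2 μ),
      Integrable (fun x => α x * Real.sqrt (e ^ 2 + ‖u x‖ ^ 2)) μ := by
    intro e u
    have hcont : Continuous fun t : ℝ => Real.sqrt (e ^ 2 + t ^ 2) :=
      Real.continuous_sqrt.comp (by continuity)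
    have hm : AEStronglyMeasurable (fun x => α x * Real.sqrt (e ^ 2 + ‖u x‖ ^ 2)) μ :=
      hαmeas.aestronglyMeasurable.mul
        (hcont.comp_aestronglyMeasurable (Lp.aestronglyMeasurable u).norm)
    refine Integrable.mono' (((integrable_const |e|).add (hint_norm u)).const_mul C) hm ?_
    filter_upwards [hα] with x hx
    have hs : Real.sqrt (e ^ 2 + ‖u x‖ ^ 2) ≤ |e| + ‖u x‖ :=
      sqrt_add_sq_le e ‖u x‖ (norm_nonneg _)
    rw [Real.norm_eq_abs, abs_of_nonneg (mul_nonneg hx.1 (Real.sqrt_nonneg _))]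
    calc α x * Real.sqrt (e ^ 2 + ‖u x‖ ^ 2) ≤ C * (|e| + ‖u x‖) :=
          mul_le_mul hx.2 hs (Real.sqrt_nonneg _) hC
      _ = C * (|e| + ‖u x‖) := rfl
  have hint_inner : ∀ u : Lp E 2 μ, Integrable (fun x => ⟪fvec x, u x⟫) μ := by
    intro u
    refine (L2.integrable_inner (𝕜 := ℝ) g u).congr ?_
    filter_upwards [hg] with x hx
    rw [hx]
  -- abbreviations
  set A : ℝ := ∫ x, α x * Real.sqrt (ε₀ ^ 2 + ‖wlim x‖ ^ 2) ∂μ with hA_def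
  set J : ℕ → ℝ := fun n => ∫ x, ⟪fvec x, (w n) x⟫ ∂μ with hJ_def
  set Jinf : ℝ := ∫ x, ⟪fvec x, wlim x⟫ ∂μ with hJinf_def
  set Φ : ℕ → ℝ := fun n => ∫ x, α x * Real.sqrt ((ε n) ^ 2 + ‖(w n) x‖ ^ 2) ∂μ with hΦ_def
  set u : ℕ → ℝ :=
    fun n => A + (J n - Jinf) - (μ Set.univ).toReal * (C * |ε n - ε₀|) with hu_def
  -- key integral inequality
  have key : ∀ n, u n ≤ Φ n := by
    intro n
    have hintL : Integrable (fun x =>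
        α x * Real.sqrt (ε₀ ^ 2 + ‖wlim x‖ ^ 2) +
          (⟪fvec x, (w n) x⟫ - ⟪fvec x, wlim x⟫) - C * |ε n - ε₀|) μ :=
      (((hint_phi ε₀ wlim).add ((hint_inner (w n)).sub (hint_inner wlim))).sub
        (integrable_const _))
    have hae : ∀ᵐ x ∂μ,
        α x * Real.sqrt (ε₀ ^ 2 + ‖wlim x‖ ^ 2) +
          (⟪fvec x, (w n) x⟫ - ⟪fvec x, wlim x⟫) - C * |ε n - ε₀| ≤
        α x * Real.sqrt ((ε n) ^ 2 + ‖(w n) x‖ ^ 2) := by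
      filter_upwards [hα] with x hx
      exact pointwise_key (α x) C ε₀ (ε n) hx.1 hx.2 hε₀ (hε n) ((w n) x) (wlim x)
    have hmono := integral_mono_ae hintL (hint_phi (ε n) (w n)) hae
    have heq : ∫ x, (α x * Real.sqrt (ε₀ ^ 2 + ‖wlim x‖ ^ 2) +
          (⟪fvec x, (w n) x⟫ - ⟪fvec x, wlim x⟫) - C * |ε n - ε₀|) ∂μ = u n := by
      have etest := integral_sub ((hint_phi ε₀ wlim).add ((hint_inner (w n)).sub (hint_inner wlim)))
          (integrable_const (C * |ε n - ε₀|))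
      simp only [Pi.add_apply, Pi.sub_apply] at etest
      rw [etest]
      have e2 := integral_add (hint_phi ε₀ wlim) ((hint_inner (w n)).sub (hint_inner wlim))
      simp only [Pi.add_apply, Pi.sub_apply] at e2
      rw [e2]
      have e3 := integral_sub (hint_inner (w n)) (hint_inner wlim)
      rw [e3, integral_const, smul_eq_mul]
      rfl
    rw [heq] at hmono
    exact hmono
  -- limit of u
  have hJconv : Filter.Tendsto J Filter.atTop (nhds Jinf) := by
    have hrw : ∀ v : Lp E 2 μ, (∫ x, ⟪v x, g x⟫ ∂μ) = ∫ x, ⟪fvec x, v x⟫ ∂μ := by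
      intro v
      apply integral_congr_ae
      filter_upwards [hg] with x hx
      rw [hx, real_inner_comm]
    have h := hweak g
    rw [hrw wlim] at h
    simpa only [hrw] using h
  have habs : Filter.Tendsto (fun n => |ε n - ε₀|) Filter.atTop (nhds 0) := by
    have := (hεconv.sub (tendsto_const_nhds (x := ε₀))).abs
    simpa using this
  have hu_tend : Filter.Tendsto u Filter.atTop (nhds A) := by
    have h := (tendsto_const_nhds (x := A)).add ((hJconv.sub (tendsto_const_nhds (x := Jinf))).sub
      ((tendsto_const_nhds (x := (μ Set.univ).toReal)).mul
        ((tendsto_const_nhds (x := C)).mul habs)))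
    simp only [sub_self, mul_zero, add_zero, sub_zero, zero_sub, zero_add] at h
    have : u = fun n => A + ((J n - Jinf) - (μ Set.univ).toReal * (C * |ε n - ε₀|)) := by
      funext n; rw [hu_def]; ring
    rw [this]
    simpa using h
  -- uniform bound on ‖w n‖ via Banach–Steinhaus
  have hbdd : ∃ M : ℝ, ∀ n, ‖w n‖ ≤ M := by
    have hpt : ∀ v : Lp E 2 μ, ∃ c : ℝ, ∀ n : ℕ, ‖(innerSL ℝ (w n)) v‖ ≤ c := by
      intro v
      have ht : Filter.Tendsto (fun n => ‖∫ x, ⟪(w n) x, v x⟫ ∂μ‖) Filter.atTop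
          (nhds ‖∫ x, ⟪wlim x, v x⟫ ∂μ‖) := (hweak v).norm
      obtain ⟨c, hc⟩ := ht.bddAbove_range
      refine ⟨c, fun n => ?_⟩
      have h1 : (innerSL ℝ (w n)) v = ⟪w n, v⟫ := rfl
      rw [h1, L2.inner_def]
      exact hc ⟨n, rfl⟩
    obtain ⟨M, hM⟩ := banach_steinhaus hpt
    exact ⟨M, fun n => by simpa [innerSL_apply_norm] using hM n⟩
  obtain ⟨M, hM⟩ := hbdd
  -- eventual upper bound on Φ
  have hΦ_ub : ∀ᶠ n in Filter.atTop,
      Φ n ≤ C * ((ε₀ + 1) * (μ Set.univ).toReal + Real.sqrt ((μ Set.univ).toReal) * M) := by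
    have hev : ∀ᶠ n in Filter.atTop, ε n ≤ ε₀ + 1 := by
      have := hεconv.eventually_le_const (show ε₀ < ε₀ + 1 by linarith)
      simpa using this
    filter_upwards [hev] with n hn
    have h1 : Φ n ≤ ∫ x, C * (ε n + ‖(w n) x‖) ∂μ := by
      apply integral_mono_ae (hint_phi (ε n) (w n))
        (((integrable_const (ε n)).add (hint_norm (w n))).const_mul C)
      filter_upwards [hα] with x hx
      have hs : Real.sqrt ((ε n) ^ 2 + ‖(w n) x‖ ^ 2) ≤ ε n + ‖(w n) x‖ := by
        have := sqrt_add_sq_le (ε n) ‖(w n) x‖ (norm_nonneg _)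
        rwa [abs_of_nonneg (hε n)] at this
      exact mul_le_mul hx.2 hs (Real.sqrt_nonneg _) hC
    have h2 : ∫ x, C * (ε n + ‖(w n) x‖) ∂μ =
        C * (ε n * (μ Set.univ).toReal + ∫ x, ‖(w n) x‖ ∂μ) := by
      simp only [integral_const_mul,
        integral_add (integrable_const (ε n)) (hint_norm (w n)),
        integral_const, smul_eq_mul, Measure.real, mul_comm ((μ Set.univ).toReal) (ε n)]
    have h3 : ∫ x, ‖(w n) x‖ ∂μ ≤ Real.sqrt ((μ Set.univ).toReal) * M := by
      refine (int_norm_le μ (w n)).trans ?_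
      exact mul_le_mul_of_nonneg_left (hM n) (Real.sqrt_nonneg _)
    have h4 : ε n * (μ Set.univ).toReal ≤ (ε₀ + 1) * (μ Set.univ).toReal :=
      mul_le_mul_of_nonneg_right hn ENNReal.toReal_nonneg
    calc Φ n ≤ C * (ε n * (μ Set.univ).toReal + ∫ x, ‖(w n) x‖ ∂μ) := by rw [← h2]; exact h1
      _ ≤ C * ((ε₀ + 1) * (μ Set.univ).toReal + Real.sqrt ((μ Set.univ).toReal) * M) :=
          mul_le_mul_of_nonneg_left (by linarith) hC
  -- conclude
  rw [← hu_tend.liminf_eq]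
  exact Filter.liminf_le_liminf (Filter.Eventually.of_forall key)
    hu_tend.isBoundedUnder_ge
    (Filter.isCoboundedUnder_ge_of_eventually_le Filter.atTop hΦ_ub)
end

section
/- Characterization of the subdifferential of Φ_0 on L²: for w, ζ ∈ L²(μ; ℝ^N), the inequality Φ_0(z) ≥ Φ_0(w) + ⟨ζ, z − w⟩_{L²(μ;ℝ^N)} holds for all z ∈ L²(μ; ℝ^N) if and only if there exists a measurable ω : Ω → ℝ^N with |ω(x)| ≤ 1 and ω(x) ∈ Sgn(w(x)) (i.e. ω(x)·w(x) = |w(x)|) for μ-a.e. x ∈ Ω, such that ζ = α ω μ-a.e. in Ω. In particular the domain of ∂Φ_0 is all of L²(μ; ℝ^N). -/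
open MeasureTheory
open scoped RealInnerProductSpace

/-- Characterization of the subdifferential of `Φ_0` on `L²(μ; ℝ^N)`:
`ζ ∈ ∂Φ_0(w)` iff there is a measurable `ω : Ω → ℝ^N` with `|ω| ≤ 1` and
`ω·w = |w|` (i.e. `ω ∈ Sgn(w)`) μ-a.e., such that `ζ = α ω` μ-a.e. -/
theorem subdifferential_Phi_zero (N : ℕ) (hN : 0 < N)
    {Ω : Type*} [MeasurableSpace Ω] (μ : Measure Ω) [IsFiniteMeasure μ]
    (α : Ω → ℝ) (hαmeas : Measurable α) (C : ℝ) (hC : 0 ≤ C)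
    (hα : ∀ᵐ x ∂μ, 0 ≤ α x ∧ α x ≤ C)
    (w ζ : Lp (EuclideanSpace ℝ (Fin N)) 2 μ) :
    (∀ z : Lp (EuclideanSpace ℝ (Fin N)) 2 μ,
        (∫ x, α x * ‖w x‖ ∂μ) + ∫ x, ⟪ζ x, z x - w x⟫ ∂μ ≤ ∫ x, α x * ‖z x‖ ∂μ) ↔
      ∃ ω : Ω → EuclideanSpace ℝ (Fin N), Measurable ω ∧
        (∀ᵐ x ∂μ, ‖ω x‖ ≤ 1) ∧
        (∀ᵐ x ∂μ, ⟪ω x, w x⟫ = ‖w x‖) ∧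
        (∀ᵐ x ∂μ, ζ x = α x • ω x) := by
  have intAZ : ∀ z : Lp (EuclideanSpace ℝ (Fin N)) 2 μ,
      Integrable (fun x => α x * ‖z x‖) μ := by
    intro z
    have hz1 : Integrable (fun x => ‖z x‖) μ := by
      have := (Lp.memLp z).mono_exponent (p := 1) (by norm_num)
      exact (memLp_one_iff_integrable.mp this).norm
    refine (hz1.const_mul C).mono' ?_ ?_
    · exact (hαmeas.aemeasurable.mul
        ((Lp.stronglyMeasurable z).measurable.norm.aemeasurable)).aestronglyMeasurable
    · filter_upwards [hα] with x ⟨h0, h1⟩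
      have : |α x * ‖z x‖| = α x * ‖z x‖ := abs_of_nonneg (by positivity)
      rw [Real.norm_eq_abs, this]
      exact mul_le_mul_of_nonneg_right h1 (norm_nonneg _)
  constructor
  · intro H
    -- Step A: ∫ ⟪ζ, v⟫ ≤ ∫ α‖v‖ for all v
    have key : ∀ v : Lp (EuclideanSpace ℝ (Fin N)) 2 μ,
        ∫ x, ⟪ζ x, v x⟫ ∂μ ≤ ∫ x, α x * ‖v x‖ ∂μ := by
      intro v
      have h := H (w + v)
      have e1 : (fun x => ⟪ζ x, (w + v) x - w x⟫) =ᵐ[μ] fun x => ⟪ζ x, v x⟫ := by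
        filter_upwards [Lp.coeFn_add w v] with x hx
        rw [hx]; simp
      rw [integral_congr_ae e1] at h
      have hpt : ∀ᵐ x ∂μ, α x * ‖(w + v) x‖ ≤ α x * ‖w x‖ + α x * ‖v x‖ := by
        filter_upwards [hα, Lp.coeFn_add w v] with x ⟨h0, _⟩ hx
        rw [hx, ← mul_add]
        exact mul_le_mul_of_nonneg_left (norm_add_le _ _) h0
      have e2 : ∫ x, α x * ‖(w + v) x‖ ∂μ ≤
          (∫ x, α x * ‖w x‖ ∂μ) + ∫ x, α x * ‖v x‖ ∂μ := by
        rw [← integral_add (intAZ w) (intAZ v)]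
        exact integral_mono_ae (intAZ (w + v)) ((intAZ w).add (intAZ v)) hpt
      linarith
    have hζint : Integrable (fun x => ‖ζ x‖ ^ 2) μ := by
      refine (L2.integrable_inner (𝕜 := ℝ) ζ ζ).congr ?_
      exact Filter.Eventually.of_forall fun x => real_inner_self_eq_norm_sq _
    -- setwise inequality
    have setE : ∀ s : Set Ω, MeasurableSet s →
        ∫ x in s, ‖ζ x‖ ^ 2 ∂μ ≤ ∫ x in s, α x * ‖ζ x‖ ∂μ := by
      intro s hs
      set v := (MemLp.indicator hs (Lp.memLp ζ)).toLp (s.indicator ⇑ζ) with hv_def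
      have hv : ⇑v =ᵐ[μ] s.indicator ⇑ζ := MemLp.coeFn_toLp _
      have h := key v
      have e1 : (fun x => ⟪ζ x, v x⟫) =ᵐ[μ] s.indicator (fun x => ‖ζ x‖ ^ 2) := by
        filter_upwards [hv] with x hx
        rw [hx]
        by_cases hxs : x ∈ s
        · rw [Set.indicator_of_mem hxs, Set.indicator_of_mem hxs]
          exact real_inner_self_eq_norm_sq _
        · simp [Set.indicator_of_notMem hxs]
      have e2 : (fun x => α x * ‖v x‖) =ᵐ[μ] s.indicator (fun x => α x * ‖ζ x‖) := by
        filter_upwards [hv] with x hx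
        rw [hx]
        by_cases hxs : x ∈ s
        · simp [Set.indicator_of_mem hxs]
        · simp [Set.indicator_of_notMem hxs]
      rw [integral_congr_ae e1, integral_congr_ae e2, integral_indicator hs,
        integral_indicator hs] at h
      exact h
    have hle : ∀ᵐ x ∂μ, ‖ζ x‖ ≤ α x := by
      have hg : Integrable (fun x => α x * ‖ζ x‖ - ‖ζ x‖ ^ 2) μ := (intAZ ζ).sub hζint
      have h0 : 0 ≤ᵐ[μ] fun x => α x * ‖ζ x‖ - ‖ζ x‖ ^ 2 := by
        refine ae_nonneg_of_forall_setIntegral_nonneg hg fun s hs _ => ?_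
        rw [integral_sub ((intAZ ζ).integrableOn) (hζint.integrableOn)]
        linarith [setE s hs]
      filter_upwards [h0, hα] with x hx ⟨ha0, _⟩
      by_cases hz : ‖ζ x‖ = 0
      · rw [hz]; exact ha0
      · have h2 : 0 < ‖ζ x‖ := lt_of_le_of_ne (norm_nonneg _) (Ne.symm hz)
        simp only [Pi.zero_apply] at hx
        nlinarith [hx, h2]
    -- Step B: ⟪ζ, w⟫ = α ‖w‖ a.e.
    have hCS : ∀ᵐ x ∂μ, ⟪ζ x, w x⟫ ≤ α x * ‖w x‖ := by
      filter_upwards [hle] with x hx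
      calc ⟪ζ x, w x⟫ ≤ ‖ζ x‖ * ‖w x‖ := real_inner_le_norm _ _
        _ ≤ α x * ‖w x‖ := mul_le_mul_of_nonneg_right hx (norm_nonneg _)
    have hint_zw : Integrable (fun x => ⟪ζ x, w x⟫) μ := L2.integrable_inner ζ w
    have h0 := H 0
    have e1 : (fun x => ⟪ζ x, (0 : Lp (EuclideanSpace ℝ (Fin N)) 2 μ) x - w x⟫)
        =ᵐ[μ] fun x => -⟪ζ x, w x⟫ := by
      filter_upwards [Lp.coeFn_zero (EuclideanSpace ℝ (Fin N)) 2 μ] with x hx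
      rw [hx]
      simp only [Pi.zero_apply, zero_sub, inner_neg_right]
    have e2 : (fun x => α x * ‖(0 : Lp (EuclideanSpace ℝ (Fin N)) 2 μ) x‖)
        =ᵐ[μ] fun _ => (0 : ℝ) := by
      filter_upwards [Lp.coeFn_zero (EuclideanSpace ℝ (Fin N)) 2 μ] with x hx
      rw [hx]; simp
    rw [integral_congr_ae e1, integral_congr_ae e2, integral_neg, integral_zero] at h0
    have hge : ∫ x, α x * ‖w x‖ ∂μ ≤ ∫ x, ⟪ζ x, w x⟫ ∂μ := by linarith
    have hle2 : ∫ x, ⟪ζ x, w x⟫ ∂μ ≤ ∫ x, α x * ‖w x‖ ∂μ :=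
      integral_mono_ae hint_zw (intAZ w) hCS
    have heq0 : ∫ x, (α x * ‖w x‖ - ⟪ζ x, w x⟫) ∂μ = 0 := by
      rw [integral_sub (intAZ w) hint_zw]; linarith
    have hipw : ∀ᵐ x ∂μ, ⟪ζ x, w x⟫ = α x * ‖w x‖ := by
      have := (integral_eq_zero_iff_of_nonneg_ae
        (by filter_upwards [hCS] with x hx; simpa [sub_nonneg] using hx)
        ((intAZ w).sub hint_zw)).mp heq0
      filter_upwards [this] with x hx
      have : α x * ‖w x‖ - ⟪ζ x, w x⟫ = 0 := hx
      linarith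
    -- construct ω
    refine ⟨fun x => if α x = 0 then ‖w x‖⁻¹ • (w x) else (α x)⁻¹ • (ζ x), ?_, ?_, ?_, ?_⟩
    · have hWm : Measurable (⇑w) := (Lp.stronglyMeasurable w).measurable
      have hZm : Measurable (⇑ζ) := (Lp.stronglyMeasurable ζ).measurable
      exact Measurable.ite (hαmeas (measurableSet_singleton 0))
        ((hWm.norm.inv).smul hWm) ((hαmeas.inv).smul hZm)
    · filter_upwards [hα, hle] with x ⟨ha0, _⟩ hx
      by_cases h0 : α x = 0
      · simp only [if_pos h0]
        rw [norm_smul, norm_inv, norm_norm]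
        by_cases hw0 : ‖w x‖ = 0
        · simp [hw0]
        · rw [inv_mul_cancel₀ hw0]
      · simp only [if_neg h0]
        have hab : 0 < α x := lt_of_le_of_ne ha0 (Ne.symm h0)
        rw [norm_smul, norm_inv, Real.norm_eq_abs, abs_of_pos hab]
        rw [inv_mul_le_iff₀ hab, mul_one]
        exact hx
    · filter_upwards [hα, hipw] with x ⟨ha0, _⟩ hx
      by_cases h0 : α x = 0
      · simp only [if_pos h0]
        rw [real_inner_smul_left, real_inner_self_eq_norm_sq]
        by_cases hw0 : ‖w x‖ = 0
        · simp [hw0]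
        · field_simp
      · simp only [if_neg h0]
        rw [real_inner_smul_left, hx]
        field_simp
    · filter_upwards [hα, hle] with x ⟨ha0, _⟩ hx
      by_cases h0 : α x = 0
      · simp only [if_pos h0, h0, zero_smul]
        have : ‖ζ x‖ ≤ 0 := h0 ▸ hx
        have : ‖ζ x‖ = 0 := le_antisymm this (norm_nonneg _)
        exact norm_eq_zero.mp this
      · simp only [if_neg h0, smul_smul, mul_inv_cancel₀ h0, one_smul]
  · rintro ⟨ω, hmeas, hb, hip, hzeq⟩ z
    have h3 : Integrable (fun x => ⟪ζ x, z x - w x⟫) μ := by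
      refine (L2.integrable_inner (𝕜 := ℝ) ζ (z - w)).congr ?_
      filter_upwards [Lp.coeFn_sub z w] with x hx
      rw [hx]; simp
    have hpt : ∀ᵐ x ∂μ, α x * ‖w x‖ + ⟪ζ x, z x - w x⟫ ≤ α x * ‖z x‖ := by
      filter_upwards [hα, hb, hip, hzeq] with x ⟨ha0, _⟩ hbx hipx hzx
      rw [hzx, real_inner_smul_left, inner_sub_right, hipx]
      have h1 : ⟪ω x, z x⟫ ≤ ‖z x‖ := by
        calc ⟪ω x, z x⟫ ≤ ‖ω x‖ * ‖z x‖ := real_inner_le_norm _ _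
          _ ≤ 1 * ‖z x‖ := mul_le_mul_of_nonneg_right hbx (norm_nonneg _)
          _ = ‖z x‖ := one_mul _
      nlinarith [mul_le_mul_of_nonneg_left h1 ha0]
    calc (∫ x, α x * ‖w x‖ ∂μ) + ∫ x, ⟪ζ x, z x - w x⟫ ∂μ
        = ∫ x, (α x * ‖w x‖ + ⟪ζ x, z x - w x⟫) ∂μ := (integral_add (intAZ w) h3).symm
      _ ≤ ∫ x, α x * ‖z x‖ ∂μ := integral_mono_ae ((intAZ w).add h3) (intAZ z) hpt
end

section
/- Single-valuedness of the subdifferential of Φ_ε on L² for ε > 0: for ε > 0 and w, ζ ∈ L²(μ; ℝ^N), the inequality Φ_ε(z) ≥ Φ_ε(w) + ⟨ζ, z − w⟩_{L²(μ;ℝ^N)} holds for all z ∈ L²(μ; ℝ^N) if and only if ζ(x) = α(x) · w(x)/√(ε² + |w(x)|²) for μ-a.e. x ∈ Ω; that is, ∂Φ_ε(w) = {α ∇γ_ε(w)} for every w ∈ L²(μ; ℝ^N). -/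
open MeasureTheory
open scoped RealInnerProductSpace

section Aux

variable {E : Type*} [NormedAddCommGroup E] [InnerProductSpace ℝ E]

lemma gamma_pos {ε : ℝ} (hε : 0 < ε) (b : E) : 0 < Real.sqrt (ε ^ 2 + ‖b‖ ^ 2) :=
  Real.sqrt_pos.2 (by positivity)

lemma key_convex {ε : ℝ} (hε : 0 < ε) (a b : E) :
    Real.sqrt (ε ^ 2 + ‖b‖ ^ 2) + (Real.sqrt (ε ^ 2 + ‖b‖ ^ 2))⁻¹ * ⟪b, a - b⟫ ≤
      Real.sqrt (ε ^ 2 + ‖a‖ ^ 2) := by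
  set s := Real.sqrt (ε ^ 2 + ‖b‖ ^ 2) with hsdef
  set t := Real.sqrt (ε ^ 2 + ‖a‖ ^ 2) with htdef
  have hs0 : 0 < s := gamma_pos hε b
  have ht0 : 0 < t := gamma_pos hε a
  have hs : s ^ 2 = ε ^ 2 + ‖b‖ ^ 2 := Real.sq_sqrt (by positivity)
  have ht : t ^ 2 = ε ^ 2 + ‖a‖ ^ 2 := Real.sq_sqrt (by positivity)
  have hinner : ⟪b, a - b⟫ = ⟪b, a⟫ - ‖b‖ ^ 2 := by
    rw [inner_sub_right, real_inner_self_eq_norm_sq]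
  have hba : ⟪b, a⟫ ≤ ‖b‖ * ‖a‖ := real_inner_le_norm b a
  have hsq : (ε ^ 2 + ‖b‖ * ‖a‖) ^ 2 ≤ (s * t) ^ 2 := by
    rw [mul_pow, hs, ht]
    nlinarith [sq_nonneg (ε * (‖a‖ - ‖b‖)), sq_nonneg ε, norm_nonneg a, norm_nonneg b]
  have hst : ε ^ 2 + ‖b‖ * ‖a‖ ≤ s * t := by
    have h1 : (0:ℝ) ≤ ε ^ 2 + ‖b‖ * ‖a‖ := by positivity
    have h2 : (0:ℝ) ≤ s * t := by positivity
    nlinarith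
  have h2 : ε ^ 2 + ⟪b, a⟫ ≤ s * t := by nlinarith
  rw [hinner]
  have : s + s⁻¹ * (⟪b, a⟫ - ‖b‖ ^ 2) = s⁻¹ * (ε ^ 2 + ⟪b, a⟫) := by
    field_simp; nlinarith [hs]
  rw [this]
  calc s⁻¹ * (ε ^ 2 + ⟪b, a⟫) ≤ s⁻¹ * (s * t) := by
        apply mul_le_mul_of_nonneg_left h2 (by positivity)
    _ = t := by field_simp

lemma pointwise_unique {ε : ℝ} (hε : 0 < ε) {a : ℝ} (ha : 0 ≤ a) (b c : E)
    (h : ∀ y : E, ⟪c, y⟫ ≤ a * (Real.sqrt (ε ^ 2 + ‖b + y‖ ^ 2) - Real.sqrt (ε ^ 2 + ‖b‖ ^ 2))) :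
    c = (a / Real.sqrt (ε ^ 2 + ‖b‖ ^ 2)) • b := by
  set s := Real.sqrt (ε ^ 2 + ‖b‖ ^ 2) with hsdef
  have hs0 : 0 < s := gamma_pos hε b
  have hs : s ^ 2 = ε ^ 2 + ‖b‖ ^ 2 := Real.sq_sqrt (by positivity)
  set g : E := (a / s) • b with hgdef
  set d : E := c - g with hddef
  -- f t = a * sqrt (ε² + ‖b + t • d‖²)
  set p : ℝ → ℝ := fun t => ε ^ 2 + ‖b‖ ^ 2 + 2 * ⟪b, d⟫ * t + ‖d‖ ^ 2 * t ^ 2 with hpdef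
  have hnorm : ∀ t : ℝ, ε ^ 2 + ‖b + t • d‖ ^ 2 = p t := by
    intro t
    have := norm_add_sq_real b (t • d)
    rw [this, real_inner_smul_right, norm_smul]
    simp [hpdef, mul_pow]
    ring
  have hp0 : p 0 = s ^ 2 := by simp [hpdef, hs]
  have hpderiv : HasDerivAt p (2 * ⟪b, d⟫) 0 := by
    have h1 : HasDerivAt (fun t : ℝ => ε ^ 2 + ‖b‖ ^ 2 + 2 * ⟪b, d⟫ * t + ‖d‖ ^ 2 * t ^ 2)
        (2 * ⟪b, d⟫ + ‖d‖ ^ 2 * (2 * 0)) 0 := by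
      have := ((hasDerivAt_id (0:ℝ)).const_mul (2 * ⟪b, d⟫)).const_add (ε ^ 2 + ‖b‖ ^ 2)
      have h2 := ((hasDerivAt_pow 2 (0:ℝ)).const_mul (‖d‖ ^ 2))
      simpa using this.fun_add h2
    simpa using h1
  have hsqrt : HasDerivAt Real.sqrt (1 / (2 * Real.sqrt (p 0))) (p 0) := by
    apply Real.hasDerivAt_sqrt
    rw [hp0]; positivity
  have hf : HasDerivAt (fun t => a * Real.sqrt (p t)) (a * (⟪b, d⟫ / s)) 0 := by
    have := (hsqrt.comp 0 hpderiv).const_mul a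
    refine this.congr_deriv (Eq.symm ?_)
    rw [hp0, Real.sqrt_sq hs0.le]
    field_simp
  -- φ t = f t - ⟪c,d⟫ t has a local min at 0
  have hφ : HasDerivAt (fun t => a * Real.sqrt (p t) - ⟪c, d⟫ * t)
      (a * (⟪b, d⟫ / s) - ⟪c, d⟫) 0 := by
    simpa using hf.fun_sub ((hasDerivAt_id (0:ℝ)).const_mul ⟪c, d⟫)
  have hmin : IsLocalMin (fun t => a * Real.sqrt (p t) - ⟪c, d⟫ * t) 0 := by
    apply Filter.Eventually.of_forall
    intro t
    have hy := h (t • d)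
    rw [real_inner_smul_right] at hy
    have hrw : ε ^ 2 + ‖b + t • d‖ ^ 2 = p t := hnorm t
    rw [hrw] at hy
    have : Real.sqrt (p 0) = s := by rw [hp0, Real.sqrt_sq hs0.le]
    simp only [this]
    nlinarith [hy]
  have hzero := hmin.hasDerivAt_eq_zero hφ
  have hcd : ⟪c, d⟫ = (a / s) * ⟪b, d⟫ := by
    field_simp at hzero ⊢
    linarith
  have hgd : ⟪g, d⟫ = (a / s) * ⟪b, d⟫ := real_inner_smul_left b d (a / s)
  have hdd : ⟪d, d⟫ = 0 := by
    rw [hddef, inner_sub_left, hcd, hgd]; ring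
  have : d = 0 := by rwa [inner_self_eq_zero] at hdd
  have := sub_eq_zero.mp this
  rw [this, hgdef]

lemma sqrt_le_add {ε t : ℝ} (hε : 0 ≤ ε) (ht : 0 ≤ t) :
    Real.sqrt (ε ^ 2 + t ^ 2) ≤ ε + t := by
  rw [show ε + t = Real.sqrt ((ε + t) ^ 2) by rw [Real.sqrt_sq (by positivity)]]
  apply Real.sqrt_le_sqrt
  nlinarith

lemma integrable_alpha_gamma {Ω : Type*} [MeasurableSpace Ω] {μ : Measure Ω}
    [IsFiniteMeasure μ] {α : Ω → ℝ} (hαmeas : Measurable α) {C : ℝ}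
    (hα : ∀ᵐ x ∂μ, 0 ≤ α x ∧ α x ≤ C) {ε : ℝ} (hε : 0 < ε)
    {u : Ω → E} (hu : MemLp u 2 μ) :
    Integrable (fun x => α x * Real.sqrt (ε ^ 2 + ‖u x‖ ^ 2)) μ := by
  have hum := hu.aestronglyMeasurable
  have hsm : AEStronglyMeasurable (fun x => Real.sqrt (ε ^ 2 + ‖u x‖ ^ 2)) μ := by
    apply Real.continuous_sqrt.comp_aestronglyMeasurable
    apply AEStronglyMeasurable.add aestronglyMeasurable_const
    exact (continuous_pow 2).comp_aestronglyMeasurable hum.norm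
  have hmeas : AEStronglyMeasurable (fun x => α x * Real.sqrt (ε ^ 2 + ‖u x‖ ^ 2)) μ :=
    hαmeas.aestronglyMeasurable.mul hsm
  have hint : Integrable (fun x => C * ε + C * ‖u x‖) μ :=
    (integrable_const _).add ((hu.integrable (by norm_num)).norm.const_mul C)
  apply hint.mono' hmeas
  filter_upwards [hα] with x ⟨h0, hC⟩
  have h1 : Real.sqrt (ε ^ 2 + ‖u x‖ ^ 2) ≤ ε + ‖u x‖ := sqrt_le_add hε.le (norm_nonneg _)
  have h2 : 0 ≤ Real.sqrt (ε ^ 2 + ‖u x‖ ^ 2) := Real.sqrt_nonneg _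
  rw [Real.norm_eq_abs, abs_of_nonneg (by positivity)]
  have hC0 : 0 ≤ C := le_trans h0 hC
  nlinarith [norm_nonneg (u x)]


end Aux

/-- Single-valuedness of the subdifferential of `Φ_ε` on `L²(μ; ℝ^N)` for `ε > 0`:
`ζ ∈ ∂Φ_ε(w)` iff `ζ(x) = α(x) · w(x)/√(ε² + |w(x)|²)` μ-a.e.; that is,
`∂Φ_ε(w) = {α ∇γ_ε(w)}`. -/
theorem subdifferential_Phi_eps (N : ℕ) (hN : 0 < N)
    {Ω : Type*} [MeasurableSpace Ω] (μ : Measure Ω) [IsFiniteMeasure μ]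
    (α : Ω → ℝ) (hαmeas : Measurable α) (C : ℝ) (hC : 0 ≤ C)
    (hα : ∀ᵐ x ∂μ, 0 ≤ α x ∧ α x ≤ C)
    (ε : ℝ) (hε : 0 < ε)
    (w ζ : Lp (EuclideanSpace ℝ (Fin N)) 2 μ) :
    (∀ z : Lp (EuclideanSpace ℝ (Fin N)) 2 μ,
        (∫ x, α x * Real.sqrt (ε ^ 2 + ‖w x‖ ^ 2) ∂μ) + ∫ x, ⟪ζ x, z x - w x⟫ ∂μ ≤
          ∫ x, α x * Real.sqrt (ε ^ 2 + ‖z x‖ ^ 2) ∂μ) ↔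
      (∀ᵐ x ∂μ, ζ x = (α x / Real.sqrt (ε ^ 2 + ‖w x‖ ^ 2)) • w x) := by

  have intW := integrable_alpha_gamma hαmeas hα hε (Lp.memLp w)
  constructor
  · -- forward
    intro H
    -- Step 1
    have step1 : ∀ v : Ω → EuclideanSpace ℝ (Fin N), MemLp v 2 μ →
        ∀ᵐ x ∂μ, ⟪ζ x, v x⟫ ≤
          α x * (Real.sqrt (ε ^ 2 + ‖w x + v x‖ ^ 2) - Real.sqrt (ε ^ 2 + ‖w x‖ ^ 2)) := by
      intro v hv
      have hwv : MemLp (fun x => w x + v x) 2 μ := (Lp.memLp w).add hv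
      have intWV := integrable_alpha_gamma hαmeas hα hε hwv
      have intInner : Integrable (fun x => ⟪ζ x, v x⟫) μ := by
        have h2 := L2.integrable_inner (𝕜 := ℝ) ζ (hv.toLp v)
        apply h2.congr
        filter_upwards [hv.coeFn_toLp] with x hx
        rw [hx]
      have hInt : Integrable (fun x =>
          (α x * Real.sqrt (ε ^ 2 + ‖w x + v x‖ ^ 2)
            - α x * Real.sqrt (ε ^ 2 + ‖w x‖ ^ 2)) - ⟪ζ x, v x⟫) μ :=
        (intWV.sub intW).sub intInner
      have hae0 := ae_nonneg_of_forall_setIntegral_nonneg hInt ?_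
      · filter_upwards [hae0] with x hx
        simp only [Pi.zero_apply] at hx
        rw [mul_sub]
        linarith
      intro S hS _
      set vS : Ω → EuclideanSpace ℝ (Fin N) := S.indicator v with hvSdef
      have hz : MemLp (fun x => w x + vS x) 2 μ := (Lp.memLp w).add (hv.indicator hS)
      set z : Lp (EuclideanSpace ℝ (Fin N)) 2 μ := hz.toLp _ with hzdef
      have hzfn : ∀ᵐ x ∂μ, z x = w x + vS x := hz.coeFn_toLp
      have key := H z
      have e1 : ∫ x, ⟪ζ x, z x - w x⟫ ∂μ = ∫ x in S, ⟪ζ x, v x⟫ ∂μ := by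
        rw [← integral_indicator hS]
        apply integral_congr_ae
        filter_upwards [hzfn] with x hx
        rw [hx]
        by_cases hxS : x ∈ S <;>
          simp [hvSdef, Set.indicator_of_mem, Set.indicator_of_notMem, hxS]
      have e2 : ∫ x, α x * Real.sqrt (ε ^ 2 + ‖z x‖ ^ 2) ∂μ
          = ∫ x, α x * Real.sqrt (ε ^ 2 + ‖w x + vS x‖ ^ 2) ∂μ := by
        apply integral_congr_ae
        filter_upwards [hzfn] with x hx
        rw [hx]
      have intWVS := integrable_alpha_gamma hαmeas hα hε hz
      have e3 : ∫ x, α x * Real.sqrt (ε ^ 2 + ‖w x + vS x‖ ^ 2) ∂μ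
          = (∫ x in S, (α x * Real.sqrt (ε ^ 2 + ‖w x + v x‖ ^ 2)
              - α x * Real.sqrt (ε ^ 2 + ‖w x‖ ^ 2)) ∂μ)
            + ∫ x, α x * Real.sqrt (ε ^ 2 + ‖w x‖ ^ 2) ∂μ := by
        have intfg : Integrable (fun x =>
            α x * Real.sqrt (ε ^ 2 + ‖w x + v x‖ ^ 2)
              - α x * Real.sqrt (ε ^ 2 + ‖w x‖ ^ 2)) μ := intWV.sub intW
        rw [← integral_indicator hS, ← integral_add (intfg.indicator hS) intW]
        apply integral_congr_ae
        apply Filter.Eventually.of_forall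
        intro x
        by_cases hxS : x ∈ S <;>
          simp [hvSdef, Set.indicator_of_mem, Set.indicator_of_notMem, hxS]
      have e4 : ∫ x in S, ((α x * Real.sqrt (ε ^ 2 + ‖w x + v x‖ ^ 2)
            - α x * Real.sqrt (ε ^ 2 + ‖w x‖ ^ 2)) - ⟪ζ x, v x⟫) ∂μ
          = (∫ x in S, (α x * Real.sqrt (ε ^ 2 + ‖w x + v x‖ ^ 2)
              - α x * Real.sqrt (ε ^ 2 + ‖w x‖ ^ 2)) ∂μ)
            - ∫ x in S, ⟪ζ x, v x⟫ ∂μ :=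
        integral_sub (intWV.sub intW).integrableOn intInner.integrableOn
      rw [e1, e2, e3] at key
      rw [e4]
      linarith
    -- Step 2
    obtain ⟨u, hu⟩ := TopologicalSpace.exists_dense_seq (EuclideanSpace ℝ (Fin N))
    have hAll : ∀ᵐ x ∂μ, ∀ n : ℕ, ⟪ζ x, u n⟫ ≤
        α x * (Real.sqrt (ε ^ 2 + ‖w x + u n‖ ^ 2) - Real.sqrt (ε ^ 2 + ‖w x‖ ^ 2)) :=
      ae_all_iff.mpr fun n => step1 (fun _ => u n) (memLp_const _)
    filter_upwards [hAll, hα] with x hx hαx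
    apply pointwise_unique hε hαx.1
    intro y
    have hclosed : IsClosed {y : EuclideanSpace ℝ (Fin N) |
        ⟪ζ x, y⟫ ≤ α x * (Real.sqrt (ε ^ 2 + ‖w x + y‖ ^ 2)
          - Real.sqrt (ε ^ 2 + ‖w x‖ ^ 2))} := by
      apply isClosed_le
      · exact continuous_const.inner continuous_id
      · exact continuous_const.mul (((Real.continuous_sqrt.comp
          (continuous_const.add ((continuous_const.add continuous_id).norm.pow 2)))).sub
          continuous_const)
    exact hclosed.closure_subset_iff.mpr (Set.range_subset_iff.mpr hx) (hu y)
  · -- reverse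
    intro hae z
    have intC := integrable_alpha_gamma hαmeas hα hε (Lp.memLp z)
    have intB : Integrable (fun x => ⟪ζ x, z x - w x⟫) μ := by
      have h2 := L2.integrable_inner (𝕜 := ℝ) ζ (z - w)
      apply h2.congr
      filter_upwards [Lp.coeFn_sub z w] with x hx
      rw [hx]
      simp
    rw [← integral_add intW intB]
    apply integral_mono_ae (intW.add intB) intC
    filter_upwards [hα, hae] with x hαx hz
    simp only [Pi.add_apply]
    have hk := key_convex hε (z x) (w x)
    have h2 := mul_le_mul_of_nonneg_left hk hαx.1
    rw [hz, real_inner_smul_left]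
    rw [div_eq_mul_inv]
    nlinarith [h2]
end
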